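/- Let a_1,...,a_k and b_1,...,b_k be two collections of vectors in ℂ^n. Then det(⟨a_p, a_q⟩)_{p,q} · det(⟨b_p, b_q⟩)_{p,q} ≥ |det(⟨a_p, b_q⟩)_{p,q}|², where ⟨·,·⟩ is the standard Hermitian inner product. -/

import Mathlib

open Matrix Finset Equiv BigOperators

section CauchyBinet

variable {R : Type*} [CommRing R] {k n : ℕ}

instance : DecidablePred (StrictMono : (Fin k → Fin n) → Prop) :=
  fun f => decidable_of_iff (∀ a b : Fin k, a < b → f a < f b) Iff.rfl

private lemma det_mul_sum_aux (M : Matrix (Fin k) (Fin n) R) (N : Matrix (Fin n) (Fin k) R) :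
    (M * N).det =
      ∑ p : Fin k → Fin n, (∏ i, N (p i) i) * (M.submatrix id p).det := by
  calc (M * N).det
      = ∑ p : Fin k → Fin n, ∑ σ : Perm (Fin k),
          ((Equiv.Perm.sign σ : ℤ) : R) * ∏ i, M (σ i) (p i) * N (p i) i := by
        simp only [det_apply', mul_apply, prod_univ_sum, mul_sum, Fintype.piFinset_univ]
        rw [Finset.sum_comm]
    _ = _ := by
        refine Finset.sum_congr rfl fun p _ => ?_
        rw [det_apply', Finset.mul_sum]
        refine Finset.sum_congr rfl fun σ _ => ?_
        simp only [submatrix_apply, id_eq]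
        rw [Finset.prod_mul_distrib]
        ring

/-- The Cauchy–Binet formula. -/
private lemma cauchyBinet (M : Matrix (Fin k) (Fin n) R) (N : Matrix (Fin n) (Fin k) R) :
    (M * N).det = ∑ g : {g : Fin k → Fin n // StrictMono g},
      (M.submatrix id g.1).det * (N.submatrix g.1 id).det := by
  rw [det_mul_sum_aux]
  have h0 : ∀ p ∈ Finset.univ.filter (fun p : Fin k → Fin n => ¬ Function.Injective p),
      (∏ i, N (p i) i) * (M.submatrix id p).det = 0 := by
    intro p hp
    simp only [Finset.mem_filter, Finset.mem_univ, true_and] at hp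
    obtain ⟨i, j, hij, hne⟩ : ∃ i j, p i = p j ∧ i ≠ j := by
      rw [Function.Injective] at hp
      push_neg at hp
      exact hp
    have : (M.submatrix id p).det = 0 :=
      Matrix.det_zero_of_column_eq hne (fun r => by simp [hij])
    rw [this, mul_zero]
  rw [← Finset.sum_filter_add_sum_filter_not Finset.univ
      (fun p : Fin k → Fin n => Function.Injective p), Finset.sum_eq_zero h0, add_zero]
  have hbij : ∑ p ∈ Finset.univ.filter (fun p : Fin k → Fin n => Function.Injective p),
      (∏ i, N (p i) i) * (M.submatrix id p).det
      = ∑ x : {g : Fin k → Fin n // StrictMono g} × Perm (Fin k),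
          (∏ i, N ((x.1.1 ∘ x.2) i) i) * (M.submatrix id (x.1.1 ∘ x.2)).det := by
    refine (Finset.sum_bij (fun x _ => x.1.1 ∘ x.2) ?_ ?_ ?_ ?_).symm
    · intro x _
      simp only [Finset.mem_filter, Finset.mem_univ, true_and]
      exact x.1.2.injective.comp x.2.injective
    · rintro ⟨⟨g₁, hg₁⟩, τ₁⟩ _ ⟨⟨g₂, hg₂⟩, τ₂⟩ _ h
      replace h : g₁ ∘ ⇑τ₁ = g₂ ∘ ⇑τ₂ := h
      haveI : WellFoundedLT (Fin k) := Finite.to_wellFoundedLT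
      have hr : Set.range (g₁ ∘ ⇑τ₁) = Set.range (g₂ ∘ ⇑τ₂) := by rw [h]
      rw [Set.range_comp, Set.range_comp, Set.range_eq_univ.mpr τ₁.surjective,
        Set.range_eq_univ.mpr τ₂.surjective, Set.image_univ, Set.image_univ] at hr
      have hg : g₁ = g₂ := (hg₁.range_inj hg₂).mp hr
      subst hg
      have hτ : τ₁ = τ₂ := Equiv.ext fun i => hg₁.injective (congrFun h i)
      rw [hτ]
    · intro p hp
      simp only [Finset.mem_filter, Finset.mem_univ, true_and] at hp
      set s : Finset (Fin n) := Finset.univ.image p with hs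
      have hcard : s.card = k := by
        rw [hs, Finset.card_image_of_injective _ hp, Finset.card_univ, Fintype.card_fin]
      set g : Fin k → Fin n := ⇑(s.orderEmbOfFin hcard) with hg
      have hmem : ∀ i, p i ∈ s := fun i => Finset.mem_image_of_mem p (Finset.mem_univ i)
      have hu : Function.Injective
          (fun i => (s.orderIsoOfFin hcard).symm ⟨p i, hmem i⟩) := by
        intro i j hij
        apply hp
        have := congrArg (fun x => ((s.orderIsoOfFin hcard) x : Fin n)) hij
        simpa using this
      set τ : Perm (Fin k) :=
        Equiv.ofBijective _ ((Finite.injective_iff_bijective).mp hu) with hτ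
      refine ⟨⟨⟨g, (s.orderEmbOfFin hcard).strictMono⟩, τ⟩, Finset.mem_univ _, ?_⟩
      funext i
      show g (τ i) = p i
      simp only [hτ, Equiv.ofBijective_apply, hg]
      exact congrArg Subtype.val
        ((s.orderIsoOfFin hcard).apply_symm_apply ⟨p i, hmem i⟩)
    · intro x _
      rfl
  rw [hbij, Fintype.sum_prod_type]
  refine Finset.sum_congr rfl fun g _ => ?_
  have hdet : ∀ τ : Perm (Fin k), (M.submatrix id (g.1 ∘ τ)).det
      = ((Equiv.Perm.sign τ : ℤ) : R) * (M.submatrix id g.1).det := by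
    intro τ
    have : M.submatrix id (g.1 ∘ τ) = (M.submatrix id g.1).submatrix id τ := by
      ext i j; simp
    rw [this, Matrix.det_permute']
  have hNdet : (N.submatrix g.1 id).det
      = ∑ τ : Perm (Fin k), ((Equiv.Perm.sign τ : ℤ) : R) * ∏ i, N (g.1 (τ i)) i := by
    rw [det_apply']
    rfl
  rw [hNdet, Finset.mul_sum]
  refine Finset.sum_congr rfl fun τ _ => ?_
  dsimp only
  rw [hdet τ]
  simp only [Function.comp_apply]
  ring

end CauchyBinet

theorem gram_det_inequality (n k : ℕ) (a b : Fin k → EuclideanSpace ℂ (Fin n)) :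
    ‖Matrix.det (fun p q : Fin k => (inner ℂ (a p) (b q) : ℂ))‖ ^ 2 ≤
      (Matrix.det (fun p q : Fin k => (inner ℂ (a p) (a q) : ℂ))).re *
        (Matrix.det (fun p q : Fin k => (inner ℂ (b p) (b q) : ℂ))).re := by
  classical
  set A : Matrix (Fin k) (Fin n) ℂ := fun p j => (starRingEnd ℂ) (a p j) with hA
  set B : Matrix (Fin k) (Fin n) ℂ := fun p j => (starRingEnd ℂ) (b p j) with hB
  set Na : Matrix (Fin n) (Fin k) ℂ := fun j q => a q j with hNa
  set Nb : Matrix (Fin n) (Fin k) ℂ := fun j q => b q j with hNb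
  have hinner : ∀ (u v : Fin k → EuclideanSpace ℂ (Fin n)) (p q : Fin k),
      (inner ℂ (u p) (v q) : ℂ) = ∑ j, (starRingEnd ℂ) (u p j) * v q j := by
    intro u v p q
    rw [PiLp.inner_apply]
    simp [RCLike.inner_apply]
    exact Finset.sum_congr rfl fun j _ => mul_comm _ _
  have hCab : (fun p q : Fin k => (inner ℂ (a p) (b q) : ℂ)) = A * Nb := by
    funext p q; rw [hinner]; rfl
  have hCaa : (fun p q : Fin k => (inner ℂ (a p) (a q) : ℂ)) = A * Na := by
    funext p q; rw [hinner]; rfl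
  have hCbb : (fun p q : Fin k => (inner ℂ (b p) (b q) : ℂ)) = B * Nb := by
    funext p q; rw [hinner]; rfl
  set x : {g : Fin k → Fin n // StrictMono g} → ℂ :=
    fun g => (A.submatrix id g.1).det with hx
  set z : {g : Fin k → Fin n // StrictMono g} → ℂ :=
    fun g => (B.submatrix id g.1).det with hz
  have hNaSub : ∀ g : {g : Fin k → Fin n // StrictMono g},
      (Na.submatrix g.1 id).det = (starRingEnd ℂ) (x g) := by
    intro g
    have : Na.submatrix g.1 id = (A.submatrix id g.1)ᴴ := by
      ext i j
      exact (star_star ((a j) (g.1 i))).symm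
    rw [this, Matrix.det_conjTranspose, hx]
    rfl
  have hNbSub : ∀ g : {g : Fin k → Fin n // StrictMono g},
      (Nb.submatrix g.1 id).det = (starRingEnd ℂ) (z g) := by
    intro g
    have : Nb.submatrix g.1 id = (B.submatrix id g.1)ᴴ := by
      ext i j
      exact (star_star ((b j) (g.1 i))).symm
    rw [this, Matrix.det_conjTranspose, hz]
    rfl
  have hab : (Matrix.det (fun p q : Fin k => (inner ℂ (a p) (b q) : ℂ)))
      = ∑ g : {g : Fin k → Fin n // StrictMono g}, x g * (starRingEnd ℂ) (z g) := by
    rw [hCab, cauchyBinet]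
    exact Finset.sum_congr rfl fun g _ => by rw [hNbSub g]
  have haa : (Matrix.det (fun p q : Fin k => (inner ℂ (a p) (a q) : ℂ))).re
      = ∑ g : {g : Fin k → Fin n // StrictMono g}, Complex.normSq (x g) := by
    rw [hCaa, cauchyBinet]
    rw [Complex.re_sum]
    refine Finset.sum_congr rfl fun g _ => ?_
    rw [hNaSub g, Complex.mul_conj]
    simp [hx]
  have hbb : (Matrix.det (fun p q : Fin k => (inner ℂ (b p) (b q) : ℂ))).re
      = ∑ g : {g : Fin k → Fin n // StrictMono g}, Complex.normSq (z g) := by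
    rw [hCbb, cauchyBinet]
    rw [Complex.re_sum]
    refine Finset.sum_congr rfl fun g _ => ?_
    rw [hNbSub g, Complex.mul_conj]
    simp [hz]
  rw [hab, haa, hbb]
  calc ‖∑ g : {g : Fin k → Fin n // StrictMono g}, x g * (starRingEnd ℂ) (z g)‖ ^ 2
      ≤ (∑ g : {g : Fin k → Fin n // StrictMono g},
          ‖x g‖ * ‖z g‖) ^ 2 := by
        apply pow_le_pow_left₀ (norm_nonneg _)
        refine le_trans (norm_sum_le _ _) (le_of_eq ?_)
        refine Finset.sum_congr rfl fun g _ => ?_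
        rw [norm_mul, Complex.norm_conj]
    _ ≤ (∑ g : {g : Fin k → Fin n // StrictMono g}, ‖x g‖ ^ 2) *
          (∑ g : {g : Fin k → Fin n // StrictMono g}, ‖z g‖ ^ 2) :=
        Finset.sum_mul_sq_le_sq_mul_sq _ _ _
    _ = (∑ g : {g : Fin k → Fin n // StrictMono g}, Complex.normSq (x g)) *
          (∑ g : {g : Fin k → Fin n // StrictMono g}, Complex.normSq (z g)) := by
        simp [Complex.sq_norm]
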